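/- arXiv:2502.15347 — 4 statements merged into one kernel-verified Lean document; each statement's English description precedes it below -/
import Mathlib

section
/- Let α ∈ ℝ be such that α/π is irrational, and let T_α denote the rotation of the circle 𝕊¹ = ℝ/2πℤ by angle α (i.e., x ↦ x + α). Then there do not exist Lebesgue measurable sets B₀, B₁ ⊆ 𝕊¹ with 𝕊¹ = B₀ ∪ B₁, B₀ ∩ B₁ = ∅, T_α(B₀) ∩ B₀ = ∅ and T_α(B₁) ∩ B₁ = ∅. In other words, the graph G_α on 𝕊¹ in which x ≠ y are adjacent iff T_α(x) = y or T_α(y) = x admits no proper 2-coloring with Lebesgue measurable color classes. -/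
open MeasureTheory

instance : Fact (0 < 2 * Real.pi) := ⟨by positivity⟩

lemma denseRange_zsmul_irrational (β : ℝ) (hβ : Irrational (β / (2 * Real.pi))) :
    DenseRange (fun n : ℤ => n • ((β : AddCircle (2 * Real.pi)))) := by
  have h2π : (2 * Real.pi) ≠ 0 := by positivity
  -- the subgroup of ℝ generated by β and 2π is dense
  set S : AddSubgroup ℝ := AddSubgroup.closure {β, 2 * Real.pi} with hSdef
  have hdense : Dense (S : Set ℝ) := by
    rcases S.dense_or_cyclic with h | ⟨a, ha⟩
    · exact h
    · exfalso
      have hβS : β ∈ S := AddSubgroup.subset_closure (by simp)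
      have hπS : (2 * Real.pi) ∈ S := AddSubgroup.subset_closure (by simp)
      rw [ha, ← AddSubgroup.zmultiples_eq_closure, AddSubgroup.mem_zmultiples_iff] at hβS hπS
      obtain ⟨m, hm⟩ := hβS
      obtain ⟨n, hn⟩ := hπS
      have hn0 : n ≠ 0 := by
        rintro rfl
        rw [zero_smul] at hn
        exact h2π hn.symm
      have hn0' : (n : ℝ) ≠ 0 := Int.cast_ne_zero.mpr hn0
      apply hβ
      refine ⟨(m : ℚ) / n, ?_⟩
      push_cast
      rw [div_eq_div_iff hn0' h2π, ← hm, ← hn]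
      push_cast [zsmul_eq_mul]
      ring
  -- push forward to the circle
  have hq : Continuous ((↑) : ℝ → AddCircle (2 * Real.pi)) := continuous_quotient_mk'
  have himg : Dense (((↑) : ℝ → AddCircle (2 * Real.pi)) '' (S : Set ℝ)) := by
    have hsurj : DenseRange ((↑) : ℝ → AddCircle (2 * Real.pi)) :=
      QuotientAddGroup.mk'_surjective _ |>.denseRange
    exact hsurj.dense_image hq hdense
  have hsub : S ≤ AddSubgroup.comap
      (QuotientAddGroup.mk' (AddSubgroup.zmultiples (2 * Real.pi)))
      (AddSubgroup.zmultiples ((β : ℝ) : AddCircle (2 * Real.pi))) := by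
    rw [hSdef, AddSubgroup.closure_le]
    rintro x hx
    rcases hx with rfl | hx
    · exact AddSubgroup.mem_zmultiples _
    · rw [Set.mem_singleton_iff] at hx
      subst hx
      rw [SetLike.mem_coe, AddSubgroup.mem_comap]
      have hz : (QuotientAddGroup.mk' (AddSubgroup.zmultiples (2 * Real.pi)))
          (2 * Real.pi) = 0 := AddCircle.coe_period (p := 2 * Real.pi)
      rw [hz]
      exact zero_mem _
  refine fun x => himg.mono ?_ x
  rintro _ ⟨y, hy, rfl⟩
  obtain ⟨n, hn⟩ := AddSubgroup.mem_zmultiples_iff.mp (hsub hy)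
  exact ⟨n, hn⟩

/-- **Irrational rotations admit no measurable proper 2-coloring.** If `α/π` is
irrational, then the circle `ℝ/2πℤ` cannot be partitioned into two Lebesgue measurable
sets `B₀, B₁` each of which is moved off itself by the rotation `x ↦ x + α`; that is,
the graph of the rotation admits no proper 2-coloring with Lebesgue measurable color
classes. -/
theorem irrational_rotation_no_measurable_two_coloring (α : ℝ)
    (hα : Irrational (α / Real.pi)) :
    ¬ ∃ B₀ B₁ : Set (AddCircle (2 * Real.pi)),
        NullMeasurableSet B₀ volume ∧ NullMeasurableSet B₁ volume ∧
        B₀ ∪ B₁ = Set.univ ∧ B₀ ∩ B₁ = ∅ ∧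
        ((fun x => x + (α : AddCircle (2 * Real.pi))) '' B₀) ∩ B₀ = ∅ ∧
        ((fun x => x + (α : AddCircle (2 * Real.pi))) '' B₁) ∩ B₁ = ∅ := by
  rintro ⟨B₀, B₁, hm₀, hm₁, hunion, hdisj, h₀, h₁⟩
  -- `B₁` is the complement of `B₀`
  have hcompl : B₁ = B₀ᶜ := by
    ext x
    constructor
    · intro hx hx'
      have : x ∈ B₀ ∩ B₁ := ⟨hx', hx⟩
      simp [hdisj] at this
    · intro hx
      have : x ∈ B₀ ∪ B₁ := hunion ▸ Set.mem_univ x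
      exact this.resolve_left hx
  subst hcompl
  -- stepping by α swaps the classes
  have step₀ : ∀ x, x ∈ B₀ → x + (α : AddCircle (2 * Real.pi)) ∈ B₀ᶜ := by
    intro x hx hx'
    have : x + (α : AddCircle (2 * Real.pi)) ∈
        ((fun x => x + (α : AddCircle (2 * Real.pi))) '' B₀) ∩ B₀ :=
      ⟨⟨x, hx, rfl⟩, hx'⟩
    rw [h₀] at this
    exact this
  have step₁ : ∀ x, x ∈ B₀ᶜ → x + (α : AddCircle (2 * Real.pi)) ∈ B₀ := by
    intro x hx
    by_contra hx'
    have : x + (α : AddCircle (2 * Real.pi)) ∈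
        ((fun x => x + (α : AddCircle (2 * Real.pi))) '' B₀ᶜ) ∩ B₀ᶜ :=
      ⟨⟨x, hx, rfl⟩, hx'⟩
    rw [h₁] at this
    exact this
  -- `B₀` is invariant under rotation by `2α`
  have hcoe : ((2 * α : ℝ) : AddCircle (2 * Real.pi)) =
      (α : AddCircle (2 * Real.pi)) + (α : AddCircle (2 * Real.pi)) := by
    rw [← AddCircle.coe_add]; ring_nf
  have hinv : (fun x => ((2 * α : ℝ) : AddCircle (2 * Real.pi)) + x) ⁻¹' B₀ = B₀ := by
    ext x
    simp only [Set.mem_preimage, hcoe]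
    constructor
    · intro hx
      by_contra hx'
      have h1 := step₁ x hx'
      have h2 := step₀ _ h1
      apply h2
      convert hx using 1
      abel
    · intro hx
      have h1 := step₀ x hx
      have h2 := step₁ _ h1
      convert h2 using 1
      abel
  -- ergodicity of rotation by 2α
  have hirr : Irrational ((2 * α) / (2 * Real.pi)) := by
    rwa [mul_div_mul_left _ _ (two_ne_zero)]
  have herg : Ergodic (fun x => ((2 * α : ℝ) : AddCircle (2 * Real.pi)) + x) volume :=
    ergodic_add_left_of_denseRange_zsmul (denseRange_zsmul_irrational _ hirr) volume
  -- hence `B₀` is null or conull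
  have hae := herg.quasiErgodic.ae_empty_or_univ₀ hm₀
    (Filter.EventuallyEq.of_eq hinv)
  -- translation preserves measure
  have himg : ∀ B : Set (AddCircle (2 * Real.pi)),
      volume ((fun x => x + (α : AddCircle (2 * Real.pi))) '' B) = volume B := by
    intro B
    rw [show (fun x => x + (α : AddCircle (2 * Real.pi))) '' B =
        (fun x => x + (-(α : AddCircle (2 * Real.pi)))) ⁻¹' B by
      ext y; simp [Set.mem_image, Set.mem_preimage, eq_comm, sub_eq_iff_eq_add,
        ← sub_eq_add_neg, eq_sub_iff_add_eq]]
    exact measure_preimage_add_right volume _ B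
  have huniv : volume (Set.univ : Set (AddCircle (2 * Real.pi))) ≠ 0 :=
    (isOpen_univ.measure_ne_zero volume Set.univ_nonempty)
  rcases hae with hnull | hfull
  · -- B₀ null, so B₀ᶜ conull, but its image lands in the null set B₀
    have hcnull : volume B₀ = 0 := ae_eq_empty.mp hnull
    have hsub : (fun x => x + (α : AddCircle (2 * Real.pi))) '' B₀ᶜ ⊆ B₀ := by
      rintro _ ⟨x, hx, rfl⟩; exact step₁ x hx
    have h1 : volume ((fun x => x + (α : AddCircle (2 * Real.pi))) '' B₀ᶜ) = 0 :=
      measure_mono_null hsub hcnull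
    rw [himg] at h1
    have h2 : volume (B₀ᶜ) ≠ 0 := by
      intro h0
      apply huniv
      have : volume (B₀ ∪ B₀ᶜ) ≤ volume B₀ + volume B₀ᶜ := measure_union_le _ _
      rw [Set.union_compl_self, hcnull, h0, add_zero] at this
      exact le_zero_iff.mp this
    exact h2 h1
  · -- B₀ conull, so B₀ᶜ null, but the image of B₀ lands in B₀ᶜ
    have hcnull : volume (B₀ᶜ) = 0 := ae_eq_univ.mp hfull
    have hsub : (fun x => x + (α : AddCircle (2 * Real.pi))) '' B₀ ⊆ B₀ᶜ := by
      rintro _ ⟨x, hx, rfl⟩; exact step₀ x hx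
    have h1 : volume ((fun x => x + (α : AddCircle (2 * Real.pi))) '' B₀) = 0 :=
      measure_mono_null hsub hcnull
    rw [himg] at h1
    have h2 : volume B₀ ≠ 0 := by
      intro h0
      apply huniv
      have : volume (B₀ ∪ B₀ᶜ) ≤ volume B₀ + volume B₀ᶜ := measure_union_le _ _
      rw [Set.union_compl_self, h0, hcnull, add_zero] at this
      exact le_zero_iff.mp this
    exact h2 h1
end

section
/- Let Δ ≥ 1 and let G be a Borel graph with Δ(G) ≤ Δ. Then G admits a Borel vertex coloring with Δ+1 colors and a Borel edge coloring with 2Δ−1 colors; in particular χ_B(G) ≤ Δ+1 and χ'_B(G) ≤ 2Δ−1. -/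
open Set Finset

section Auxiliary

/-- Isolating a real number from a finite set by a rational interval. -/

lemma isolate_rat {F : Set ℝ} (hF : F.Finite) {y : ℝ} (hy : y ∉ F) :
    ∃ p q : ℚ, y ∈ Ioo (p : ℝ) q ∧ ∀ z ∈ F, z ∉ Ioo (p : ℝ) q := by
  obtain ⟨ε, hε, hsep⟩ : ∃ ε > 0, ∀ z ∈ F, ε ≤ |z - y| := by
    by_cases h : F.Nonempty
    · refine ⟨(hF.toFinset.image (fun z => |z - y|)).min' (by simp [h]), ?_, ?_⟩
      · rcases Finset.min'_mem (hF.toFinset.image (fun z => |z - y|)) (by simp [h]) with hmem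
        simp only [Finset.mem_image, Set.Finite.mem_toFinset] at hmem
        obtain ⟨z, hz, hzeq⟩ := hmem
        rw [← hzeq]
        exact abs_pos.mpr (sub_ne_zero.mpr (fun h' => hy (h' ▸ hz)))
      · intro z hz
        exact Finset.min'_le _ _ (by simp only [Finset.mem_image, Set.Finite.mem_toFinset]; exact ⟨z, hz, rfl⟩)
    · exact ⟨1, one_pos, fun z hz => absurd ⟨z, hz⟩ h⟩
  obtain ⟨p, hp1, hp2⟩ := exists_rat_btwn (show y - ε < y by linarith)
  obtain ⟨q, hq1, hq2⟩ := exists_rat_btwn (show y < y + ε by linarith)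
  refine ⟨p, q, ⟨hp2, hq1⟩, fun z hz hzm => ?_⟩
  have h1 : |z - y| < ε := abs_lt.mpr ⟨by linarith [hzm.1], by linarith [hzm.2]⟩
  linarith [hsep z hz]


/-- **Finite-section Luzin–Novikov (special case).** The projection of a Borel subset of
`X × ℝ` all of whose vertical sections have at most `n` points is Borel.  Proved by
induction on `n`, splitting off, for each rational interval, the part of the set where
the section meets the interval in exactly one point; that part has a Borel injective
projection by the Lusin–Souslin theorem. -/
lemma proj_measurable : ∀ (n : ℕ) (X : Type) [MeasurableSpace X] [StandardBorelSpace X]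
    (E : Set (X × ℝ)), MeasurableSet E →
    (∀ x : X, ∀ S : Finset ℝ, (↑S ⊆ {y | (x, y) ∈ E}) → S.card ≤ n) →
    MeasurableSet (Prod.fst '' E) := by
  intro n
  induction n with
  | zero =>
    intro X _ _ E hE hsec
    have : E = ∅ := by
      ext ⟨x, y⟩
      simp only [mem_empty_iff_false, iff_false]
      intro h
      have := hsec x {y} (by simpa using h)
      simp at this
    simp [this]
  | succ n ih =>
    intro X _ _ E hE hsec
    -- the set of triples ((x,y),z) with (x,y) ∈ E, y,z in the interval, z another section point
    set T : ℚ → ℚ → Set ((X × ℝ) × ℝ) := fun p q =>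
      {r | r.1 ∈ E ∧ r.1.2 ∈ Ioo (p:ℝ) q ∧ (r.1.1, r.2) ∈ E ∧ r.2 ∈ Ioo (p:ℝ) q ∧ r.2 ≠ r.1.2}
      with hTdef
    have hT : ∀ p q, MeasurableSet (T p q) := by
      intro p q
      apply MeasurableSet.inter
      · exact measurable_fst hE
      apply MeasurableSet.inter
      · exact (measurable_fst.snd) measurableSet_Ioo
      apply MeasurableSet.inter
      · exact (measurable_fst.fst.prodMk measurable_snd) hE
      apply MeasurableSet.inter
      · exact measurable_snd measurableSet_Ioo
      · exact (measurableSet_eq_fun measurable_snd measurable_fst.snd).compl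
    have hTsec : ∀ p q, ∀ a : X × ℝ, ∀ S : Finset ℝ,
        (↑S ⊆ {z | (a, z) ∈ T p q}) → S.card ≤ n := by
      intro p q ⟨x, y⟩ S hS
      rcases S.eq_empty_or_nonempty with rfl | ⟨z0, hz0⟩
      · simp
      · have h0 := hS hz0
        have hyE : (x, y) ∈ E := h0.1
        have hyS : y ∉ S := fun hyS => (hS hyS).2.2.2.2 rfl
        have hsub : ↑(insert y S) ⊆ {z | (x, z) ∈ E} := by
          intro z hz
          simp only [Finset.coe_insert, Set.mem_insert_iff] at hz
          rcases hz with rfl | hz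
          · exact hyE
          · exact (hS hz).2.2.1
        have := hsec x (insert y S) hsub
        rwa [Finset.card_insert_of_notMem hyS, Nat.add_le_add_iff_right] at this
    have hD : ∀ p q, MeasurableSet (Prod.fst '' T p q) := fun p q =>
      ih (X × ℝ) (T p q) (hT p q) (hTsec p q)
    set Epq : ℚ → ℚ → Set (X × ℝ) := fun p q =>
      (E ∩ {r : X × ℝ | r.2 ∈ Ioo (p:ℝ) q}) \ (Prod.fst '' T p q) with hEpqdef
    have hEpqm : ∀ p q, MeasurableSet (Epq p q) := fun p q =>
      ((hE.inter (measurable_snd measurableSet_Ioo)).diff (hD p q))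
    have hinj : ∀ p q, InjOn Prod.fst (Epq p q) := by
      rintro p q ⟨x, y⟩ hxy ⟨x', y'⟩ hxy' (h : x = x')
      subst h
      by_contra hne
      have hyne : y' ≠ y := fun h => hne (by rw [h])
      exact hxy.2 ⟨((x, y), y'), ⟨hxy.1.1, hxy.1.2, hxy'.1.1, hxy'.1.2, hyne⟩, rfl⟩
    have himg : ∀ p q, MeasurableSet (Prod.fst '' Epq p q) := fun p q =>
      (hEpqm p q).image_of_measurable_injOn measurable_fst (hinj p q)
    have hcover : Prod.fst '' E = ⋃ (p : ℚ) (q : ℚ), Prod.fst '' Epq p q := by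
      ext x
      simp only [mem_iUnion, Set.mem_image]
      constructor
      · rintro ⟨⟨x', y⟩, hxy, rfl⟩
        have hfin : {z | (x', z) ∈ E}.Finite := by
          by_contra hinf
          obtain ⟨S, hSsub, hScard⟩ :=
            Set.Infinite.exists_subset_card_eq hinf (n + 2)
          have := hsec x' S hSsub
          omega
        have hyF : y ∉ {z | (x', z) ∈ E} \ {y} := fun h => h.2 rfl
        obtain ⟨p, q, hymem, hiso⟩ := isolate_rat hfin.diff hyF
        refine ⟨p, q, ⟨x', y⟩, ⟨⟨hxy, hymem⟩, ?_⟩, rfl⟩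
        rintro ⟨⟨⟨x'', y''⟩, z⟩, hmem, heq⟩
        have heq' : (x'', y'') = (x', y) := heq
        obtain ⟨h1, h2⟩ := Prod.mk.inj heq'
        subst h1; subst h2
        exact hiso z ⟨hmem.2.2.1, hmem.2.2.2.2⟩ hmem.2.2.2.1
      · rintro ⟨p, q, r, hr, rfl⟩
        exact ⟨r, hr.1.1, rfl⟩
    rw [hcover]
    exact MeasurableSet.iUnion fun p => MeasurableSet.iUnion fun q => himg p q


/-- For a Borel relation with finite sections of size ≤ n, the set of points with a
neighbor in a measurable set is measurable. -/
lemma nb_measurable {W : Type} [MeasurableSpace W] [StandardBorelSpace W]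
    (adj : W → W → Prop) (hadj : MeasurableSet {p : W × W | adj p.1 p.2}) (n : ℕ)
    (hdeg : ∀ v, {w | adj v w}.Finite ∧ {w | adj v w}.ncard ≤ n)
    {e : W → ℝ} (he : MeasurableEmbedding e)
    {S : Set W} (hS : MeasurableSet S) :
    MeasurableSet {v | ∃ w, adj v w ∧ w ∈ S} := by
  set A : Set (W × W) := {p | adj p.1 p.2 ∧ p.2 ∈ S} with hA
  have hAm : MeasurableSet A := hadj.inter (measurable_snd hS)
  set φ : W × W → W × ℝ := fun p => (p.1, e p.2) with hφ
  have hφm : Measurable φ := measurable_fst.prodMk (he.measurable.comp measurable_snd)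
  have hφinj : Function.Injective φ := by
    rintro ⟨a, b⟩ ⟨c, d⟩ h
    obtain ⟨h1, h2⟩ := Prod.mk.inj h
    exact Prod.ext h1 (he.injective h2)
  have hEm : MeasurableSet (φ '' A) :=
    hAm.image_of_measurable_injOn hφm (hφinj.injOn)
  have hsec : ∀ x : W, ∀ Fs : Finset ℝ, (↑Fs ⊆ {y | (x, y) ∈ φ '' A}) → Fs.card ≤ n := by
    intro x Fs hFs
    have hsub : (↑Fs : Set ℝ) ⊆ e '' {w | adj x w} := by
      intro t ht
      obtain ⟨⟨a, b⟩, hab, habe⟩ := hFs ht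
      obtain ⟨h1, h2⟩ := Prod.mk.inj habe
      exact ⟨b, h1 ▸ hab.1, h2⟩
    calc Fs.card = (↑Fs : Set ℝ).ncard := (Set.ncard_coe_finset Fs).symm
      _ ≤ (e '' {w | adj x w}).ncard :=
          Set.ncard_le_ncard hsub ((hdeg x).1.image e)
      _ = {w | adj x w}.ncard := Set.ncard_image_of_injective _ he.injective
      _ ≤ n := (hdeg x).2
  have := proj_measurable n W (φ '' A) hEm hsec
  have himg : Prod.fst '' (φ '' A) = {v | ∃ w, adj v w ∧ w ∈ S} := by
    ext v
    constructor
    · rintro ⟨⟨a, t⟩, ⟨⟨c, d⟩, hcd, hcde⟩, rfl⟩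
      obtain ⟨h1, h2⟩ := Prod.mk.inj hcde
      exact ⟨d, h1 ▸ hcd.1, hcd.2⟩
    · rintro ⟨w, haw, hwS⟩
      exact ⟨(v, e w), ⟨(v, w), ⟨haw, hwS⟩, rfl⟩, rfl⟩
  rwa [himg] at this


open Classical in
noncomputable def pickCol (n : ℕ) (fs : Finset (Fin (n + 1))) : Fin (n + 1) :=
  if h : (Finset.univ \ fs).Nonempty then (Finset.univ \ fs).min' h else ⟨0, Nat.succ_pos n⟩

open Classical in
noncomputable def greedyCol {W : Type} (adj : W → W → Prop) (c₀ : W → ℕ) (n : ℕ) :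
    ℕ → W → Fin (n + 1)
  | i => fun v => pickCol n (@Finset.filter _ (fun k =>
      ∃ j, ∃ _ : j < i, ∃ w, adj v w ∧ c₀ w = j ∧ greedyCol adj c₀ n j w = k)
      (fun _ => Classical.propDecidable _) Finset.univ)
  termination_by i => i

open Classical in
lemma greedyCol_eq {W : Type} (adj : W → W → Prop) (c₀ : W → ℕ) (n : ℕ) (i : ℕ) (v : W) :
    greedyCol adj c₀ n i v = pickCol n (Finset.univ.filter fun k =>
      ∃ j, ∃ _ : j < i, ∃ w, adj v w ∧ c₀ w = j ∧ greedyCol adj c₀ n j w = k) := by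
  rw [greedyCol]
  dsimp only
  congr 1
  ext k
  simp only [Finset.mem_filter]

lemma pickCol_not_mem {n : ℕ} {fs : Finset (Fin (n + 1))} (h : fs.card ≤ n) :
    pickCol n fs ∉ fs := by
  have hne : (Finset.univ \ fs).Nonempty := by
    rw [← Finset.card_pos, Finset.card_sdiff_of_subset (Finset.subset_univ fs), Finset.card_univ,
      Fintype.card_fin]
    omega
  have := Finset.min'_mem (Finset.univ \ fs) hne
  rw [Finset.mem_sdiff] at this
  rw [pickCol, dif_pos hne]
  exact this.2

/-- The Borel greedy vertex coloring for an abstract Borel relation. -/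
lemma borel_vertex_coloring {W : Type} [MeasurableSpace W] [StandardBorelSpace W]
    (adj : W → W → Prop) (hsymm : ∀ x y, adj x y → adj y x) (hirr : ∀ x, ¬ adj x x)
    (hadj : MeasurableSet {p : W × W | adj p.1 p.2}) (n : ℕ)
    (hdeg : ∀ v, {w | adj v w}.Finite ∧ {w | adj v w}.ncard ≤ n) :
    ∃ c : W → Fin (n + 1), Measurable c ∧ ∀ x y, adj x y → c x ≠ c y := by
  classical
  obtain ⟨e, he⟩ := MeasureTheory.exists_measurableEmbedding_real W
  obtain ⟨f, hf⟩ := exists_surjective_nat (ℚ × ℚ)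
  -- the countable coloring
  set Good : W → ℕ → Prop := fun v i =>
    e v ∈ Set.Ioo ((f i).1 : ℝ) ((f i).2) ∧
      ¬ ∃ w, adj v w ∧ e w ∈ Set.Ioo ((f i).1 : ℝ) ((f i).2) with hGood
  have hex : ∀ v, ∃ i, Good v i := by
    intro v
    have hvnm : e v ∉ e '' {w | adj v w} := by
      rintro ⟨w, hw, hwe⟩
      exact hirr v (he.injective hwe ▸ hw)
    obtain ⟨p, q, hmem, hiso⟩ := isolate_rat ((hdeg v).1.image e) hvnm
    obtain ⟨i, hi⟩ := hf (p, q)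
    refine ⟨i, ?_, ?_⟩
    · rw [hi]; exact hmem
    · rintro ⟨w, hw, hwmem⟩
      exact hiso (e w) ⟨w, hw, rfl⟩ (by rw [hi] at hwmem; exact hwmem)
  set c₀ : W → ℕ := fun v => Nat.find (hex v) with hc₀
  have hGoodMeas : ∀ i, MeasurableSet {v | Good v i} := by
    intro i
    apply MeasurableSet.inter
    · exact he.measurable measurableSet_Ioo
    · have : MeasurableSet {v | ∃ w, adj v w ∧ w ∈ e ⁻¹' Set.Ioo ((f i).1 : ℝ) ((f i).2)} :=
        nb_measurable adj hadj n hdeg he (he.measurable measurableSet_Ioo)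
      exact this.compl
  have hc₀meas : ∀ i, MeasurableSet {v | c₀ v = i} := by
    intro i
    have : {v | c₀ v = i} =
        {v | Good v i} ∩ ⋂ (j : ℕ) (_ : j < i), {v | Good v j}ᶜ := by
      ext v
      simp only [Set.mem_inter_iff, Set.mem_iInter, Set.mem_compl_iff, Set.mem_setOf_eq, hc₀]
      rw [Nat.find_eq_iff]
    rw [this]
    exact (hGoodMeas i).inter (MeasurableSet.iInter fun j =>
      MeasurableSet.iInter fun _ => (hGoodMeas j).compl)
  have hc₀proper : ∀ v w, adj v w → c₀ v ≠ c₀ w := by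
    intro v w hvw hEq
    have hv : Good v (c₀ v) := Nat.find_spec (hex v)
    have hw : Good w (c₀ w) := Nat.find_spec (hex w)
    rw [hEq] at hv
    exact hv.2 ⟨w, hvw, hw.1⟩
  -- the greedy coloring
  set col := greedyCol adj c₀ n with hcol
  set fsF : ℕ → W → Finset (Fin (n + 1)) := fun i v => Finset.univ.filter fun k =>
      ∃ j, ∃ _ : j < i, ∃ w, adj v w ∧ c₀ w = j ∧ col j w = k with hfsF
  have hcoleq : ∀ i v, col i v = pickCol n (fsF i v) := fun i v => greedyCol_eq adj c₀ n i v
  have hcard : ∀ i v, (fsF i v).card ≤ n := by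
    intro i v
    have hwit : ∀ k ∈ fsF i v, ∃ w, adj v w ∧ col (c₀ w) w = k := by
      intro k hk
      rw [hfsF, Finset.mem_filter] at hk
      obtain ⟨-, j, hj, w, h1, h2, h3⟩ := hk
      exact ⟨w, h1, by rw [h2]; exact h3⟩
    choose wit hwit1 hwit2 using hwit
    calc (fsF i v).card ≤ (hdeg v).1.toFinset.card := by
          apply Finset.card_le_card_of_injOn (fun k => if hk : k ∈ fsF i v then wit k hk else v)
          · intro k hk
            simp only [Finset.mem_coe] at hk ⊢
            simp only [dif_pos hk, Set.Finite.mem_toFinset]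
            exact hwit1 k hk
          · intro k hk k' hk' hEq
            simp only [Finset.mem_coe] at hk hk'
            simp only [dif_pos hk, dif_pos hk'] at hEq
            rw [← hwit2 k hk, ← hwit2 k' hk', hEq]
      _ ≤ n := by rw [← Set.ncard_eq_toFinset_card _ (hdeg v).1]; exact (hdeg v).2
  have hnotmem : ∀ i v, col i v ∉ fsF i v := fun i v => by
    rw [hcoleq]; exact pickCol_not_mem (hcard i v)
  set c : W → Fin (n + 1) := fun v => col (c₀ v) v with hc
  have hkey : ∀ x y, adj x y → c₀ y < c₀ x → c x ≠ c y := by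
    intro x y hxy hlt hEq
    have hmem : c y ∈ fsF (c₀ x) x := by
      rw [hfsF, Finset.mem_filter]
      exact ⟨Finset.mem_univ _, c₀ y, hlt, y, hxy, rfl, rfl⟩
    rw [← hEq] at hmem
    exact hnotmem (c₀ x) x hmem
  have hproper : ∀ x y, adj x y → c x ≠ c y := by
    intro x y hxy
    rcases lt_trichotomy (c₀ x) (c₀ y) with h | h | h
    · exact fun hEq => hkey y x (hsymm x y hxy) h hEq.symm
    · exact absurd h (hc₀proper x y hxy)
    · exact hkey x y hxy h
  -- measurability
  have hcolmeas : ∀ i, Measurable (col i) := by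
    intro i
    induction i using Nat.strong_induction_on with
    | _ i ih =>
      have hmemk : ∀ k : Fin (n + 1), MeasurableSet {v | k ∈ fsF i v} := by
        intro k
        have : {v | k ∈ fsF i v} =
            ⋃ (j : ℕ) (_ : j < i), {v | ∃ w, adj v w ∧ w ∈ {u | c₀ u = j ∧ col j u = k}} := by
          ext v
          simp only [hfsF, Finset.mem_filter, Finset.mem_univ, true_and, Set.mem_setOf_eq,
            Set.mem_iUnion]
        rw [this]
        refine MeasurableSet.iUnion fun j => MeasurableSet.iUnion fun hj => ?_
        refine nb_measurable adj hadj n hdeg he ?_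
        have h1 : MeasurableSet {u | c₀ u = j} := hc₀meas j
        have h2 : MeasurableSet {u | col j u = k} := (ih j hj) (measurableSet_singleton k)
        exact h1.inter h2
      have hfsmeas : ∀ fs : Finset (Fin (n + 1)), MeasurableSet {v | fsF i v = fs} := by
        intro fs
        have : {v | fsF i v = fs} = ⋂ (k : Fin (n + 1)),
            (if k ∈ fs then {v | k ∈ fsF i v} else {v | k ∈ fsF i v}ᶜ) := by
          ext v
          simp only [Set.mem_iInter, Set.mem_setOf_eq]
          constructor
          · rintro rfl k
            by_cases hk : k ∈ fsF i v <;> simp [hk]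
          · intro h
            ext k
            have hh := h k
            by_cases hk : k ∈ fs
            · simp only [hk, if_true, Set.mem_setOf_eq] at hh
              simp [hk, hh]
            · simp only [hk, if_false, Set.mem_compl_iff, Set.mem_setOf_eq] at hh
              simp [hk, hh]
        rw [this]
        exact MeasurableSet.iInter fun k => by
          by_cases hk : k ∈ fs <;> simp only [hk, if_true, if_false]
          · exact hmemk k
          · exact (hmemk k).compl
      apply measurable_to_countable'
      intro k
      have : (col i) ⁻¹' {k} = ⋃ (fs : Finset (Fin (n + 1))) (_ : pickCol n fs = k),
          {v | fsF i v = fs} := by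
        ext v
        simp only [Set.mem_preimage, Set.mem_singleton_iff, Set.mem_iUnion, Set.mem_setOf_eq]
        constructor
        · intro h; exact ⟨fsF i v, by rw [← hcoleq]; exact h, rfl⟩
        · rintro ⟨fs, hpick, hfs⟩; rw [hcoleq, hfs, hpick]
      rw [this]
      exact MeasurableSet.iUnion fun fs => MeasurableSet.iUnion fun _ => hfsmeas fs
  have hcmeas : Measurable c := by
    apply measurable_to_countable'
    intro k
    have : c ⁻¹' {k} = ⋃ (i : ℕ), ({v | c₀ v = i} ∩ (col i) ⁻¹' {k}) := by
      ext v
      simp only [Set.mem_preimage, Set.mem_singleton_iff, Set.mem_iUnion, Set.mem_inter_iff,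
        Set.mem_setOf_eq, hc]
      constructor
      · intro h; exact ⟨c₀ v, rfl, h⟩
      · rintro ⟨i, rfl, h⟩; exact h
    rw [this]
    exact MeasurableSet.iUnion fun i =>
      (hc₀meas i).inter ((hcolmeas i) (measurableSet_singleton k))
  exact ⟨c, hcmeas, hproper⟩


end Auxiliary

/-- **Borel greedy colorings (Kechris–Solecki–Todorčević).** Every Borel graph `G` of
maximum degree at most `Δ` admits a Borel proper vertex coloring with `Δ + 1` colors and
a Borel proper edge coloring with `2Δ - 1` colors. -/
theorem borel_greedy_colorings {V : Type} [MeasurableSpace V] [StandardBorelSpace V]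
    (G : SimpleGraph V) (Δ : ℕ) (hΔ : 1 ≤ Δ)
    (hadj : MeasurableSet {p : V × V | G.Adj p.1 p.2})
    (hdeg : ∀ v, (G.neighborSet v).Finite ∧ (G.neighborSet v).ncard ≤ Δ) :
    (∃ c : V → Fin (Δ + 1), Measurable c ∧ ∀ x y, G.Adj x y → c x ≠ c y) ∧
    (∃ d : V → V → Fin (2 * Δ - 1),
      Measurable (fun p : V × V => d p.1 p.2) ∧
      (∀ x y, G.Adj x y → d x y = d y x) ∧
      (∀ x y z, G.Adj x y → G.Adj x z → y ≠ z → d x y ≠ d x z)) := by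
  classical
  constructor
  · exact borel_vertex_coloring G.Adj (fun x y h => h.symm) (fun x h => G.irrefl h) hadj Δ hdeg
  -- edge coloring via the line graph on oriented edges
  obtain ⟨e, he⟩ := MeasureTheory.exists_measurableEmbedding_real V
  set OE : V × V → Prop := fun p => G.Adj p.1 p.2 ∧ e p.1 < e p.2 with hOE
  set adj' : V × V → V × V → Prop := fun p q =>
    p ≠ q ∧ OE p ∧ OE q ∧ (p.1 = q.1 ∨ p.1 = q.2 ∨ p.2 = q.1 ∨ p.2 = q.2) with hadj'def
  have hsymm' : ∀ p q, adj' p q → adj' q p := by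
    rintro p q ⟨h1, h2, h3, h4⟩
    exact ⟨h1.symm, h3, h2, by tauto⟩
  have hirr' : ∀ p, ¬ adj' p p := fun p h => h.1 rfl
  -- measurability of adj'
  have heq_meas : ∀ (f g : (V × V) × (V × V) → V), Measurable f → Measurable g →
      MeasurableSet {r : (V × V) × (V × V) | f r = g r} := by
    intro f g hf hg
    have hset : {r : (V × V) × (V × V) | f r = g r} = {r | e (f r) = e (g r)} := by
      ext r
      exact ⟨fun h => congrArg e h, fun h => he.injective h⟩
    rw [hset]
    exact measurableSet_eq_fun (he.measurable.comp hf) (he.measurable.comp hg)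
  have hOE_meas : ∀ (f : (V × V) × (V × V) → V × V), Measurable f →
      MeasurableSet {r : (V × V) × (V × V) | OE (f r)} := by
    intro f hf
    apply MeasurableSet.inter
    · exact hf hadj
    · exact measurableSet_lt (he.measurable.comp (measurable_fst.comp hf))
        (he.measurable.comp (measurable_snd.comp hf))
  have hadjm' : MeasurableSet {r : (V × V) × (V × V) | adj' r.1 r.2} := by
    have h1 : MeasurableSet {r : (V × V) × (V × V) | r.1 = r.2} := by
      have hset : {r : (V × V) × (V × V) | r.1 = r.2} =
          {r : (V × V) × (V × V) | r.1.1 = r.2.1} ∩ {r | r.1.2 = r.2.2} := by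
        ext ⟨⟨a, b⟩, ⟨c, d⟩⟩
        simp only [Set.mem_setOf_eq, Set.mem_inter_iff, Prod.mk.injEq]
      rw [hset]
      exact (heq_meas _ _ measurable_fst.fst measurable_snd.fst).inter
        (heq_meas _ _ measurable_fst.snd measurable_snd.snd)
    exact (h1.compl.inter ((hOE_meas _ measurable_fst).inter ((hOE_meas _ measurable_snd).inter
      (MeasurableSet.union (heq_meas _ _ measurable_fst.fst measurable_snd.fst)
        (MeasurableSet.union (heq_meas _ _ measurable_fst.fst measurable_snd.snd)
          (MeasurableSet.union (heq_meas _ _ measurable_fst.snd measurable_snd.fst)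
            (heq_meas _ _ measurable_fst.snd measurable_snd.snd)))))))
  -- degree bound for the line graph
  set u : V → V × V → V := fun x q => if q.1 = x then q.2 else q.1 with hu
  set OEdges : V → Set (V × V) := fun x => {q | OE q ∧ (q.1 = x ∨ q.2 = x)} with hOEdges
  have hOEchar : ∀ x q, q ∈ OEdges x →
      q = (if e x < e (u x q) then (x, u x q) else (u x q, x)) := by
    rintro x ⟨a, b⟩ ⟨hab, hor⟩
    by_cases hax : a = x
    · subst hax
      have h1 : u a (a, b) = b := by simp [hu]
      rw [h1, if_pos (by exact hab.2)]
    · have hbx : b = x := hor.resolve_left hax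
      subst hbx
      have h1 : u b (a, b) = a := by simp [hu, hax]
      rw [h1, if_neg (not_lt.mpr (le_of_lt hab.2))]
  have hOEinj : ∀ x, Set.InjOn (u x) (OEdges x) := by
    intro x q hq q' hq' hEq
    rw [hOEchar x q hq, hEq, ← hOEchar x q' hq']
  have hOEmap : ∀ x, Set.MapsTo (u x) (OEdges x) (G.neighborSet x) := by
    rintro x ⟨a, b⟩ ⟨hab, hor⟩
    by_cases hax : a = x
    · subst hax
      have h1 : u a (a, b) = b := by simp [hu]
      rw [SimpleGraph.mem_neighborSet, h1]
      exact hab.1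
    · have hbx : b = x := hor.resolve_left hax
      subst hbx
      have h1 : u b (a, b) = a := by simp [hu, hax]
      rw [SimpleGraph.mem_neighborSet, h1]
      exact hab.1.symm
  have hOEfin : ∀ x, (OEdges x).Finite := by
    intro x
    exact Set.Finite.of_finite_image (((hdeg x).1.subset (hOEmap x).image_subset)) (hOEinj x)
  have hOEcard : ∀ x, (OEdges x).ncard ≤ Δ := by
    intro x
    calc (OEdges x).ncard = (u x '' OEdges x).ncard :=
          (Set.ncard_image_of_injOn (hOEinj x)).symm
      _ ≤ (G.neighborSet x).ncard :=
          Set.ncard_le_ncard (hOEmap x).image_subset (hdeg x).1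
      _ ≤ Δ := (hdeg x).2
  have hdeg' : ∀ p, {q | adj' p q}.Finite ∧ {q | adj' p q}.ncard ≤ 2 * Δ - 2 := by
    intro p
    by_cases hOEp : OE p
    · have hsub : {q | adj' p q} ⊆ (OEdges p.1 \ {p}) ∪ (OEdges p.2 \ {p}) := by
        rintro q ⟨hne, _, hOEq, hor⟩
        have hnq : q ≠ p := fun h => hne (h ▸ rfl)
        rcases hor with h | h | h | h
        · exact Or.inl ⟨⟨hOEq, Or.inl h.symm⟩, hnq⟩
        · exact Or.inl ⟨⟨hOEq, Or.inr h.symm⟩, hnq⟩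
        · exact Or.inr ⟨⟨hOEq, Or.inl h.symm⟩, hnq⟩
        · exact Or.inr ⟨⟨hOEq, Or.inr h.symm⟩, hnq⟩
      have hfin : {q | adj' p q}.Finite :=
        Set.Finite.subset (((hOEfin p.1).diff).union ((hOEfin p.2).diff)) hsub
      refine ⟨hfin, ?_⟩
      have hp1 : p ∈ OEdges p.1 := ⟨hOEp, Or.inl rfl⟩
      have hp2 : p ∈ OEdges p.2 := ⟨hOEp, Or.inr rfl⟩
      calc {q | adj' p q}.ncard
          ≤ ((OEdges p.1 \ {p}) ∪ (OEdges p.2 \ {p})).ncard :=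
            Set.ncard_le_ncard hsub (((hOEfin p.1).diff).union ((hOEfin p.2).diff))
        _ ≤ (OEdges p.1 \ {p}).ncard + (OEdges p.2 \ {p}).ncard := Set.ncard_union_le _ _
        _ ≤ (Δ - 1) + (Δ - 1) := by
            have e1 : (OEdges p.1 \ {p}).ncard = (OEdges p.1).ncard - 1 :=
              Set.ncard_diff_singleton_of_mem hp1
            have e2 : (OEdges p.2 \ {p}).ncard = (OEdges p.2).ncard - 1 :=
              Set.ncard_diff_singleton_of_mem hp2
            have := hOEcard p.1
            have := hOEcard p.2
            omega
        _ ≤ 2 * Δ - 2 := by omega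
    · have hempty : {q | adj' p q} = ∅ := by
        ext q
        simp only [Set.mem_setOf_eq, Set.mem_empty_iff_false, iff_false]
        rintro ⟨_, hOEp', _⟩
        exact hOEp hOEp'
      rw [hempty]
      simp
  obtain ⟨c', hc'meas, hc'proper⟩ :=
    borel_vertex_coloring adj' hsymm' hirr' hadjm' (2 * Δ - 2) hdeg'
  have hm : 2 * Δ - 2 + 1 = 2 * Δ - 1 := by omega
  set d : V → V → Fin (2 * Δ - 1) := fun x y =>
    if e x < e y then Fin.cast hm (c' (x, y)) else Fin.cast hm (c' (y, x)) with hd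
  have hor : ∀ x y, G.Adj x y → (if e x < e y then ((x, y) : V × V) else (y, x)) ∈ {p | OE p} := by
    intro x y hxy
    by_cases hb : e x < e y
    · rw [if_pos hb]; exact ⟨hxy, hb⟩
    · rw [if_neg hb]
      have hne : e y ≠ e x := fun h => G.ne_of_adj hxy (he.injective h.symm)
      exact ⟨hxy.symm, lt_of_le_of_ne (not_lt.mp hb) hne⟩
  have hdval : ∀ x y, G.Adj x y →
      d x y = Fin.cast hm (c' (if e x < e y then (x, y) else (y, x))) := by
    intro x y _
    by_cases hb : e x < e y
    · rw [hd]; simp only [if_pos hb]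
    · rw [hd]; simp only [if_neg hb]
  refine ⟨d, ?_, ?_, ?_⟩
  · have : (fun p : V × V => d p.1 p.2) = fun p : V × V =>
        if e p.1 < e p.2 then Fin.cast hm (c' p) else Fin.cast hm (c' (p.2, p.1)) := by
      funext p
      rw [hd]
    rw [this]
    refine Measurable.ite (measurableSet_lt (he.measurable.comp measurable_fst)
      (he.measurable.comp measurable_snd)) ?_ ?_
    · exact (measurable_from_top : Measurable (Fin.cast hm)).comp hc'meas
    · exact ((measurable_from_top : Measurable (Fin.cast hm)).comp
        (hc'meas.comp (measurable_snd.prodMk measurable_fst)) : Measurable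
          fun p : V × V => Fin.cast hm (c' (p.2, p.1)))
  · intro x y hxy
    have hne : e x ≠ e y := fun h => G.ne_of_adj hxy (he.injective h)
    rcases lt_or_gt_of_ne hne with hb | hb
    · rw [hd]; simp only [if_pos hb, if_neg (asymm hb)]
    · rw [hd]; simp only [if_neg (asymm hb), if_pos hb]
  · intro x y z hxy hxz hyz
    set p : V × V := if e x < e y then (x, y) else (y, x) with hp
    set q : V × V := if e x < e z then (x, z) else (z, x) with hq
    have hOEp : OE p := hor x y hxy
    have hOEq : OE q := hor x z hxz
    have hxny : x ≠ y := G.ne_of_adj hxy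
    have hxnz : x ≠ z := G.ne_of_adj hxz
    have hpq : adj' p q := by
      refine ⟨?_, hOEp, hOEq, ?_⟩
      · -- p ≠ q
        by_cases hb1 : e x < e y <;> by_cases hb2 : e x < e z
        · rw [hp, hq, if_pos hb1, if_pos hb2]
          intro hEq; exact hyz (Prod.mk.inj hEq).2
        · rw [hp, hq, if_pos hb1, if_neg hb2]
          intro hEq; exact hxnz (Prod.mk.inj hEq).1
        · rw [hp, hq, if_neg hb1, if_pos hb2]
          intro hEq; exact hxny ((Prod.mk.inj hEq).1).symm
        · rw [hp, hq, if_neg hb1, if_neg hb2]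
          intro hEq; exact hyz (Prod.mk.inj hEq).1
      · -- share a vertex
        have hp1 : p.1 = x ∨ p.2 = x := by
          by_cases hb1 : e x < e y <;> rw [hp] <;>
            simp only [hb1, if_true, if_false] <;> simp
        have hq1 : q.1 = x ∨ q.2 = x := by
          by_cases hb2 : e x < e z <;> rw [hq] <;>
            simp only [hb2, if_true, if_false] <;> simp
        rcases hp1 with h1 | h1 <;> rcases hq1 with h2 | h2
        · exact Or.inl (h1.trans h2.symm)
        · exact Or.inr (Or.inl (h1.trans h2.symm))
        · exact Or.inr (Or.inr (Or.inl (h1.trans h2.symm)))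
        · exact Or.inr (Or.inr (Or.inr (h1.trans h2.symm)))
    have hcpq : c' p ≠ c' q := hc'proper p q hpq
    rw [hdval x y hxy, hdval x z hxz, ← hp, ← hq]
    intro hcast
    apply hcpq
    have := congrArg Fin.val hcast
    simp only [Fin.coe_cast] at this
    exact Fin.ext this
end

section
/- Let Δ ∈ ℕ, let T be a tree (a connected acyclic graph) equipped with a proper edge coloring c_T : E(T) → [Δ], and let H be a graph equipped with an edge Δ-labeling c_H : E(H) → [Δ]. Let φ : V(T) → V(H) be a graph homomorphism that preserves edge labels, i.e., c_H({φ(u),φ(v)}) = c_T({u,v}) for every edge {u,v} of T. If H is acyclic, then φ is injective. -/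
/-- **Label-preserving homomorphisms into acyclic graphs are injective.** Let `T` be a
tree with a proper edge coloring `cT` with `Δ` colors, let `H` be a graph with an
arbitrary edge `Δ`-labeling `cH`, and let `φ` be a graph homomorphism from `T` to `H`
preserving edge labels. If `H` is acyclic then `φ` is injective. -/
theorem label_preserving_hom_injective {VT VH : Type} (Δ : ℕ)
    (T : SimpleGraph VT) (H : SimpleGraph VH) (hT : T.IsTree)
    (cT : Sym2 VT → Fin Δ)
    (hcT : ∀ x y z : VT, T.Adj x y → T.Adj x z → y ≠ z → cT s(x, y) ≠ cT s(x, z))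
    (cH : Sym2 VH → Fin Δ)
    (φ : VT → VH)
    (hhom : ∀ u v : VT, T.Adj u v → H.Adj (φ u) (φ v))
    (hlabel : ∀ u v : VT, T.Adj u v → cH s(φ u, φ v) = cT s(u, v))
    (hH : H.IsAcyclic) :
    Function.Injective φ := by
  classical
  let f : T →g H := ⟨φ, fun h => hhom _ _ h⟩
  have key : ∀ {u v : VT} (p : T.Walk u v), p.IsPath → (p.map f).IsPath := by
    intro u v p
    induction p with
    | nil => intro _; simp
    | @cons u w v h q ih =>
      intro hp
      rw [SimpleGraph.Walk.cons_isPath_iff] at hp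
      obtain ⟨hq, hu⟩ := hp
      rw [SimpleGraph.Walk.map_cons, SimpleGraph.Walk.cons_isPath_iff]
      refine ⟨ih hq, ?_⟩
      intro hmem
      have hP : ((q.map f).takeUntil (φ u) hmem).IsPath := (ih hq).takeUntil hmem
      have hadj : H.Adj (φ u) (φ w) := hhom u w h
      have hne : s(φ u, φ w) ∉ ((q.map f).takeUntil (φ u) hmem).edges := by
        intro he
        have he' : s(φ u, φ w) ∈ (q.map f).edges :=
          SimpleGraph.Walk.edges_takeUntil_subset _ _ he
        cases q with
        | nil => simp at he'
        | @cons w w' v hq' q' =>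
          rw [SimpleGraph.Walk.map_cons, SimpleGraph.Walk.edges_cons] at he'
          rcases List.mem_cons.mp he' with heq | hmem'
          · rw [Sym2.eq_iff] at heq
            rcases heq with ⟨h1, _⟩ | ⟨h1, _⟩
            · exact hadj.ne h1
            · -- φ u = φ w'
              have huw' : u ≠ w' := by
                intro rfl'
                apply hu
                rw [rfl', SimpleGraph.Walk.support_cons]
                exact List.mem_cons_of_mem _ (SimpleGraph.Walk.start_mem_support _)
              have hcol : cT s(w, u) ≠ cT s(w, w') := hcT w u w' h.symm hq' huw'
              have e1 : cH s(φ w, φ u) = cT s(w, u) := hlabel w u h.symm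
              have e2 : cH s(φ w, φ w') = cT s(w, w') := hlabel w w' hq'
              rw [h1] at e1
              exact hcol (e1 ▸ e2 ▸ rfl)
          · -- s(φ u, φ w) ∈ (q'.map f).edges, so φ w ∈ support
            have : φ w ∈ (q'.map f).support := by
              rw [Sym2.eq_swap] at hmem'
              exact SimpleGraph.Walk.fst_mem_support_of_mem_edges _ hmem'
            have hqp : ((SimpleGraph.Walk.cons hq' q').map f).IsPath := ih hq
            rw [SimpleGraph.Walk.map_cons, SimpleGraph.Walk.cons_isPath_iff] at hqp
            exact hqp.2 this
      exact hH _ ((SimpleGraph.Walk.cons_isCycle_iff _ hadj).mpr ⟨hP, hne⟩)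
  intro a b hab
  by_contra hne
  obtain ⟨p⟩ := hT.isConnected.preconnected a b
  have hp : p.toPath.1.IsPath := p.toPath.2
  have hmap : (p.toPath.1.map f).IsPath := key _ hp
  have hlen : p.toPath.1.length ≠ 0 := fun h0 =>
    hne (SimpleGraph.Walk.eq_of_length_eq_zero h0)
  have : (p.toPath.1.map f).length ≠ 0 := by
    rwa [SimpleGraph.Walk.length_map]
  have hcopy : ((p.toPath.1.map f).copy rfl hab.symm).IsPath :=
    (SimpleGraph.Walk.isPath_copy _ rfl hab.symm).mpr hmap
  rw [SimpleGraph.Walk.isPath_iff_eq_nil] at hcopy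
  apply this
  have := congrArg SimpleGraph.Walk.length hcopy
  simpa using this
end

section
/- Let Δ, k ∈ ℕ, let T be a tree (a connected acyclic graph) equipped with a proper edge coloring c_T : E(T) → [Δ], and let H be a graph equipped with an edge Δ-labeling c_H : E(H) → [Δ]. Let φ : V(T) → V(H) be a graph homomorphism that preserves edge labels, i.e., c_H({φ(u),φ(v)}) = c_T({u,v}) for every edge {u,v} of T. If the girth of H is greater than 2k+2, then φ is injective on every ball of radius k+1 in T, i.e., for every vertex v of T, the restriction of φ to B_T(v, k+1) is injective. -/
open SimpleGraph

private lemma walk_getElem_support {V : Type} {G : SimpleGraph V} {u v : V} (p : G.Walk u v) :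
    ∀ (i : ℕ) (h : i < p.support.length), p.support[i] = p.getVert i := by
  induction p with
  | nil =>
    intro i h
    simp only [Walk.support_nil, List.length_singleton] at h
    interval_cases i
    simp
  | cons ha q ih =>
    intro i h
    cases i with
    | zero => simp
    | succ i =>
      simp only [Walk.support_cons, List.length_cons] at h
      simp only [Walk.support_cons, List.getElem_cons_succ, Walk.getVert_cons_succ]
      exact ih i (by omega)

private lemma walk_getElem_edges {V : Type} {G : SimpleGraph V} {u v : V} (p : G.Walk u v) :
    ∀ (i : ℕ) (h : i < p.edges.length), p.edges[i] = s(p.getVert i, p.getVert (i+1)) := by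
  induction p with
  | nil => intro i h; simp at h
  | cons ha q ih =>
    intro i h
    cases i with
    | zero => simp [Walk.getVert_cons_succ]
    | succ i =>
      simp only [Walk.edges_cons, List.getElem_cons_succ, Walk.getVert_cons_succ]
      exact ih i (by simpa using h)

private lemma walk_exists_sub {V : Type} {G : SimpleGraph V} :
    ∀ {u v : V} (p : G.Walk u v) (i j : ℕ), i ≤ j → j ≤ p.length →
      ∃ q : G.Walk (p.getVert i) (p.getVert j), q.length = j - i := by
  intro u v p
  induction p with
  | nil =>
    intro i j hij hj
    simp only [Walk.length_nil, Nat.le_zero] at hj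
    subst hj
    have hi : i = 0 := Nat.le_zero.mp hij
    subst hi
    exact ⟨Walk.nil' _, by simp⟩
  | cons ha q ih =>
    intro i j hij hj
    cases i with
    | zero =>
      cases j with
      | zero => exact ⟨Walk.nil' _, by simp⟩
      | succ j =>
        obtain ⟨r, hr⟩ := ih 0 j (Nat.zero_le _) (by simpa using hj)
        exact ⟨Walk.cons ha (r.copy (Walk.getVert_zero q) rfl), by
          have h := Walk.length_copy r (Walk.getVert_zero q) rfl
          exact (congrArg Nat.succ (h.trans hr)).trans (by omega)⟩
    | succ i =>
      cases j with
      | zero => omega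
      | succ j =>
        obtain ⟨r, hr⟩ := ih i j (by omega) (by simpa using hj)
        exact ⟨r, by rw [Nat.succ_sub_succ]; exact hr⟩

private lemma geodesic_getVert {V : Type} {G : SimpleGraph V} (hc : G.Connected) {u v : V}
    (p : G.Walk u v) (hp : p.length = G.dist u v) {i j : ℕ} (hij : i ≤ j) (hj : j ≤ p.length) :
    G.dist (p.getVert i) (p.getVert j) = j - i := by
  obtain ⟨q, hq⟩ := walk_exists_sub p i j hij hj
  have h1 : G.dist (p.getVert i) (p.getVert j) ≤ j - i := hq ▸ SimpleGraph.dist_le q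
  obtain ⟨q0, hq0⟩ := walk_exists_sub p 0 i (Nat.zero_le _) (le_trans hij hj)
  obtain ⟨q2, hq2⟩ := walk_exists_sub p j p.length hj le_rfl
  have h0 : G.dist u (p.getVert i) ≤ i := by
    have h := hq0 ▸ SimpleGraph.dist_le q0
    rw [Walk.getVert_zero] at h
    simpa using h
  have h2 : G.dist (p.getVert j) v ≤ p.length - j := by
    have h := hq2 ▸ SimpleGraph.dist_le q2
    rwa [Walk.getVert_length] at h
  have htri : G.dist u v ≤ G.dist u (p.getVert i) +
      (G.dist (p.getVert i) (p.getVert j) + G.dist (p.getVert j) v) :=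
    le_trans hc.dist_triangle (by gcongr; exact hc.dist_triangle)
  omega

/-- **Label-preserving homomorphisms into high-girth graphs are locally injective.** Let
`T` be a tree with a proper edge coloring `cT` with `Δ` colors, let `H` be a graph with
an arbitrary edge `Δ`-labeling `cH`, and let `φ` be a graph homomorphism from `T` to `H`
preserving edge labels. If the girth of `H` is greater than `2k + 2`, then `φ` is
injective on every ball of radius `k + 1` in `T`. -/
theorem label_preserving_hom_locally_injective {VT VH : Type} (Δ k : ℕ)
    (T : SimpleGraph VT) (H : SimpleGraph VH) (hT : T.IsTree)
    (cT : Sym2 VT → Fin Δ)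
    (hcT : ∀ x y z : VT, T.Adj x y → T.Adj x z → y ≠ z → cT s(x, y) ≠ cT s(x, z))
    (cH : Sym2 VH → Fin Δ)
    (φ : VT → VH)
    (hhom : ∀ u v : VT, T.Adj u v → H.Adj (φ u) (φ v))
    (hlabel : ∀ u v : VT, T.Adj u v → cH s(φ u, φ v) = cT s(u, v))
    (hgirth : (2 * k + 2 : ℕ∞) < H.egirth) :
    ∀ v : VT, Set.InjOn φ {u | T.dist v u ≤ k + 1} := by
  classical
  have hconn : T.Connected := hT.isConnected
  -- key claim
  have key : ∀ a b : VT, T.dist a b ≤ 2 * k + 2 → φ a = φ b → a = b := by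
    by_contra hbad
    push_neg at hbad
    obtain ⟨a0, b0, hd0, hphi0, hne0⟩ := hbad
    have hP0 : ∃ a b : VT, a ≠ b ∧ φ a = φ b ∧ T.dist a b = T.dist a0 b0 :=
      ⟨a0, b0, hne0, hphi0, rfl⟩
    set P : ℕ → Prop := fun n => ∃ a b : VT, a ≠ b ∧ φ a = φ b ∧ T.dist a b = n with hPdef
    have hex : ∃ n, P n := ⟨T.dist a0 b0, hP0⟩
    set n := Nat.find hex with hndef
    obtain ⟨a, b, hab, hphi, hdist⟩ : P n := Nat.find_spec hex
    have hmin : ∀ m, m < n → ¬ P m := fun m hm => Nat.find_min hex hm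
    have hnle : n ≤ 2 * k + 2 := le_trans (Nat.find_min' hex hP0) hd0
    have hnpos : 0 < n := hdist ▸ hconn.pos_dist_of_ne hab
    obtain ⟨p, hp⟩ := hconn.exists_walk_length_eq_dist a b
    have hlen : p.length = n := hp.trans hdist
    -- Lemma A
    have lemA : ∀ i j : ℕ, i < j → j ≤ n → φ (p.getVert i) = φ (p.getVert j) →
        i = 0 ∧ j = n := by
      intro i j hij hjn hphieq
      have hd : T.dist (p.getVert i) (p.getVert j) = j - i :=
        geodesic_getVert hconn p hp (le_of_lt hij) (hlen ▸ hjn)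
      have hne : p.getVert i ≠ p.getVert j := by
        intro h
        rw [h, SimpleGraph.dist_self] at hd
        omega
      have hPd : P (j - i) := ⟨_, _, hne, hphieq, hd⟩
      have : ¬ (j - i < n) := fun h => hmin _ h hPd
      omega
    -- no backtracking within distance 2 (color argument)
    have lemB : ∀ i : ℕ, i + 2 ≤ n → φ (p.getVert i) ≠ φ (p.getVert (i + 2)) := by
      intro i hi2 heq2
      have h1 : T.Adj (p.getVert i) (p.getVert (i + 1)) :=
        p.adj_getVert_succ (by omega)
      have h2 : T.Adj (p.getVert (i + 1)) (p.getVert (i + 2)) :=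
        p.adj_getVert_succ (by rw [hlen]; omega)
      have hvne : p.getVert i ≠ p.getVert (i + 2) := by
        intro h
        have hd : T.dist (p.getVert i) (p.getVert (i+2)) = (i+2) - i :=
          geodesic_getVert hconn p hp (by omega) (by omega)
        rw [h, SimpleGraph.dist_self] at hd
        omega
      have hcol : cT s(p.getVert (i+1), p.getVert i) ≠ cT s(p.getVert (i+1), p.getVert (i+2)) :=
        hcT _ _ _ h1.symm h2 hvne
      have e1 : cH s(φ (p.getVert (i+1)), φ (p.getVert i)) = cT s(p.getVert (i+1), p.getVert i) :=
        hlabel _ _ h1.symm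
      have e2 : cH s(φ (p.getVert (i+1)), φ (p.getVert (i+2))) =
          cT s(p.getVert (i+1), p.getVert (i+2)) := hlabel _ _ h2
      rw [← heq2] at e2
      exact hcol (e1 ▸ e2 ▸ rfl)
    -- case n = 1
    rcases Nat.lt_or_ge n 3 with hn3 | hn3
    · interval_cases n
      · -- n = 1 : loop
        have hadj : T.Adj (p.getVert 0) (p.getVert 1) := p.adj_getVert_succ (by omega)
        rw [p.getVert_zero, show p.getVert 1 = b from by
          rw [← hlen]; exact p.getVert_length] at hadj
        exact H.irrefl (hphi ▸ hhom _ _ hadj)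
      · -- n = 2 : backtracking
        have := lemB 0 (by omega)
        rw [p.getVert_zero, show p.getVert 2 = b from by
          rw [← hlen]; exact p.getVert_length] at this
        exact this hphi
    · -- n ≥ 3 : build a cycle in H
      let f : T →g H := ⟨φ, fun h => hhom _ _ h⟩
      let q : H.Walk (φ a) (φ a) := (p.map f).copy rfl hphi.symm
      have hqsupp : q.support = p.support.map φ := by
        simp only [q, Walk.support_copy, Walk.support_map]; rfl
      have hqedges : q.edges = p.edges.map (Sym2.map φ) := by
        simp only [q, Walk.edges_copy, Walk.edges_map]; rfl
      have hqlen : q.length = n := by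
        simp [q, Walk.length_copy, Walk.length_map, hlen]
      have hsupplen : p.support.length = n + 1 := by
        rw [Walk.length_support, hlen]
      have hcyc : q.IsCycle := by
        constructor
        · constructor
          · -- trail : edges nodup
            constructor
            rw [hqedges]
            rw [List.nodup_iff_injective_getElem]
            intro ⟨i, hi⟩ ⟨j, hj⟩ hij
            simp only [List.length_map, Walk.length_edges, hlen] at hi hj
            simp only [List.getElem_map] at hij
            rw [walk_getElem_edges p i (by simp [hlen]; omega),
              walk_getElem_edges p j (by simp [hlen]; omega)] at hij
            simp only [Sym2.map_pair_eq, Sym2.eq_iff] at hij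
            ext
            simp only
            rcases hij with ⟨h1, h2⟩ | ⟨h1, h2⟩
            · rcases Nat.lt_trichotomy i j with h | h | h
              · exact absurd (lemA i j h (by omega) h1) (by omega)
              · exact h
              · exact absurd (lemA j i h (by omega) h1.symm) (by omega)
            · rcases Nat.lt_trichotomy (i+1) j with h | h | h
              · exact absurd (lemA (i+1) j h (by omega) h2) (by omega)
              · -- j = i + 1, so φ (getVert i) = φ (getVert (i+2))
                subst h
                exact absurd (lemA i (i+2) (by omega) (by omega) h1) (by omega)
              · rcases Nat.lt_trichotomy (j+1) i with h' | h' | h'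
                · exact absurd (lemA (j+1) i h' (by omega) h1.symm) (by omega)
                · subst h'
                  exact absurd (lemA j (j+2) (by omega) (by omega) h2.symm) (by omega)
                · omega
          · -- not nil
            intro hnil
            have : q.length = 0 := by rw [hnil]; rfl
            omega
        · -- support tail nodup
          rw [hqsupp, ← List.map_tail]
          rw [List.nodup_iff_injective_getElem]
          intro ⟨i, hi⟩ ⟨j, hj⟩ hij
          simp only [List.length_map, List.length_tail, hsupplen] at hi hj
          simp only [List.getElem_map, List.getElem_tail] at hij
          rw [walk_getElem_support p (i+1) (by omega),
            walk_getElem_support p (j+1) (by omega)] at hij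
          ext
          simp only
          rcases Nat.lt_trichotomy i j with h | h | h
          · exact absurd (lemA (i+1) (j+1) (by omega) (by omega) hij) (by omega)
          · exact h
          · exact absurd (lemA (j+1) (i+1) (by omega) (by omega) hij.symm) (by omega)
      have hle : H.egirth ≤ q.length := le_egirth.mp le_rfl _ q hcyc
      rw [hqlen] at hle
      have : (n : ℕ∞) ≤ (2 * k + 2 : ℕ∞) := by
        exact_mod_cast Nat.cast_le.mpr hnle
      exact absurd (lt_of_lt_of_le hgirth (le_trans hle this)) (lt_irrefl _)
  intro v u hu w hw heq
  apply key u w ?_ heq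
  have h1 : T.dist u w ≤ T.dist u v + T.dist v w := hconn.dist_triangle
  have h2 : T.dist u v = T.dist v u := SimpleGraph.dist_comm
  simp only [Set.mem_setOf_eq] at hu hw
  omega
end
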